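/- arXiv:2201.05733 — 5 statements merged into one kernel-verified Lean document; each statement's English description precedes it below -/
import Mathlib

section
/- For any n ≥ 4 and any k with 4 ≤ k ≤ n, the product r_k r_{k-1} r_k r_{k-1} r_{k-2} r_k r_2 equals the identity permutation of {1,...,n}. -/
/-- The prefix-reversal `r_m` on `{1, ..., n}` (encoded as `Fin n`, 0-indexed):
the 1-indexed entry `j` with `j ≤ m` is sent to `m + 1 - j`, and entries `j > m`
are fixed.  If `m > n` it is the identity. -/
def pancakeRev (n m : ℕ) : Equiv.Perm (Fin n) :=
  Function.Involutive.toPerm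
    (fun a => if h : a.val < m ∧ m ≤ n then ⟨m - 1 - a.val, by omega⟩ else a)
    (by
      intro a
      beta_reduce
      by_cases h : a.val < m ∧ m ≤ n
      · rw [dif_pos h]
        have h2 : m - 1 - a.val < m ∧ m ≤ n := by omega
        rw [dif_pos h2]
        apply Fin.ext
        simp
        omega
      · rw [dif_neg h, dif_neg h])

def pf (n m x : ℕ) : ℕ := if x < m ∧ m ≤ n then m - 1 - x else x

lemma pfs (n m x : ℕ) (hx : x < n) :
    pf n m x < n ∧ ((x < m ∧ m ≤ n ∧ pf n m x = m - 1 - x) ∨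
      (¬(x < m ∧ m ≤ n) ∧ pf n m x = x)) := by
  unfold pf; split_ifs with h <;> omega

theorem pancake_C7 (n k : ℕ) (hn : 4 ≤ n) (hk : 4 ≤ k) (hkn : k ≤ n) :
    pancakeRev n k * pancakeRev n (k - 1) * pancakeRev n k * pancakeRev n (k - 1) *
      pancakeRev n (k - 2) * pancakeRev n k * pancakeRev n 2 = 1 := by
  have hrev : ∀ m (a : Fin n), (pancakeRev n m a).val = pf n m a.val := by
    intro m a
    simp only [pancakeRev, Function.Involutive.coe_toPerm, pf]
    split_ifs <;> simp_all [Function.Involutive.toPerm] <;> split_ifs <;> omega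
  apply Equiv.ext
  intro a
  apply Fin.ext
  simp only [Equiv.Perm.mul_apply, Equiv.Perm.one_apply]
  rw [hrev, hrev, hrev, hrev, hrev, hrev, hrev]
  have h1 := pfs n 2 a.val a.isLt
  obtain ⟨y1, e1⟩ : ∃ y, pf n 2 a.val = y := ⟨_, rfl⟩
  rw [e1] at h1 ⊢
  have h2 := pfs n k y1 h1.1
  obtain ⟨y2, e2⟩ : ∃ y, pf n k y1 = y := ⟨_, rfl⟩
  rw [e2] at h2 ⊢
  have h3 := pfs n (k - 2) y2 h2.1
  obtain ⟨y3, e3⟩ : ∃ y, pf n (k - 2) y2 = y := ⟨_, rfl⟩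
  rw [e3] at h3 ⊢
  have h4 := pfs n (k - 1) y3 h3.1
  obtain ⟨y4, e4⟩ : ∃ y, pf n (k - 1) y3 = y := ⟨_, rfl⟩
  rw [e4] at h4 ⊢
  have h5 := pfs n k y4 h4.1
  obtain ⟨y5, e5⟩ : ∃ y, pf n k y4 = y := ⟨_, rfl⟩
  rw [e5] at h5 ⊢
  have h6 := pfs n (k - 1) y5 h5.1
  obtain ⟨y6, e6⟩ : ∃ y, pf n (k - 1) y5 = y := ⟨_, rfl⟩
  rw [e6] at h6 ⊢
  have h7 := pfs n k y6 h6.1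
  have ha := a.isLt
  omega
end

section
/- For any n ≥ 4 and any integers i, j, k with 2 ≤ i < j ≤ k-1 and 4 ≤ k ≤ n, the product r_k r_j r_i r_j r_k r_{k-j+i} r_i r_{k-j+i} equals the identity permutation of {1,...,n}. -/
lemma pancakeRev_val (n m : ℕ) (a : Fin n) :
    ((pancakeRev n m) a).val = if a.val < m ∧ m ≤ n then m - 1 - a.val else a.val := by
  simp only [pancakeRev, Function.Involutive.toPerm, Equiv.coe_fn_mk]
  split_ifs with h
  · rfl
  · rfl

set_option maxHeartbeats 2000000 in
theorem pancake_C8_1 (n i j k : ℕ) (hn : 4 ≤ n) (hi : 2 ≤ i) (hij : i < j)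
    (hjk : j ≤ k - 1) (hk : 4 ≤ k) (hkn : k ≤ n) :
    pancakeRev n k * pancakeRev n j * pancakeRev n i * pancakeRev n j * pancakeRev n k *
      pancakeRev n (k - j + i) * pancakeRev n i * pancakeRev n (k - j + i) = 1 := by
  ext a
  simp only [Equiv.Perm.mul_apply, Equiv.Perm.one_apply]
  have ha := a.isLt
  have e1 := pancakeRev_val n (k - j + i) a
  set a1 := pancakeRev n (k - j + i) a with ha1
  have e2 := pancakeRev_val n i a1
  set a2 := pancakeRev n i a1 with ha2
  have e3 := pancakeRev_val n (k - j + i) a2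
  set a3 := pancakeRev n (k - j + i) a2 with ha3
  have e4 := pancakeRev_val n k a3
  set a4 := pancakeRev n k a3 with ha4
  have e5 := pancakeRev_val n j a4
  set a5 := pancakeRev n j a4 with ha5
  have e6 := pancakeRev_val n i a5
  set a6 := pancakeRev n i a5 with ha6
  have e7 := pancakeRev_val n j a6
  set a7 := pancakeRev n j a6 with ha7
  have e8 := pancakeRev_val n k a7
  set a8 := pancakeRev n k a7 with ha8
  split_ifs at e1 e2 e3 e4 e5 e6 e7 e8 <;> omega
end

section
/- For any n ≥ 4 and any k with 4 ≤ k ≤ n, the product r_k r_{k-1} r_2 r_{k-1} r_k r_2 r_3 r_2 equals the identity permutation of {1,...,n}. -/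
lemma pancakeRev_apply (n m : ℕ) (a : Fin n) :
    (pancakeRev n m a).val = if a.val < m ∧ m ≤ n then m - 1 - a.val else a.val := by
  simp only [pancakeRev, Function.Involutive.toPerm, Equiv.coe_fn_mk]
  split_ifs with h
  · rfl
  · rfl

set_option maxHeartbeats 1000000 in
theorem pancake_C8_2 (n k : ℕ) (hn : 4 ≤ n) (hk : 4 ≤ k) (hkn : k ≤ n) :
    pancakeRev n k * pancakeRev n (k - 1) * pancakeRev n 2 * pancakeRev n (k - 1) *
      pancakeRev n k * pancakeRev n 2 * pancakeRev n 3 * pancakeRev n 2 = 1 := by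
  ext a
  simp only [Equiv.Perm.mul_apply, Equiv.Perm.one_apply]
  set b1 := pancakeRev n 2 a with hb1d
  set b2 := pancakeRev n 3 b1 with hb2d
  set b3 := pancakeRev n 2 b2 with hb3d
  set b4 := pancakeRev n k b3 with hb4d
  set b5 := pancakeRev n (k-1) b4 with hb5d
  set b6 := pancakeRev n 2 b5 with hb6d
  set b7 := pancakeRev n (k-1) b6 with hb7d
  have h1 := pancakeRev_apply n 2 a
  have h2 := pancakeRev_apply n 3 b1
  have h3 := pancakeRev_apply n 2 b2
  have h4 := pancakeRev_apply n k b3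
  have h5 := pancakeRev_apply n (k-1) b4
  have h6 := pancakeRev_apply n 2 b5
  have h7 := pancakeRev_apply n (k-1) b6
  have h8 := pancakeRev_apply n k b7
  rw [← hb1d] at h1; rw [← hb2d] at h2; rw [← hb3d] at h3; rw [← hb4d] at h4
  rw [← hb5d] at h5; rw [← hb6d] at h6; rw [← hb7d] at h7
  rw [h8]
  clear_value b1 b2 b3 b4 b5 b6 b7
  clear hb1d hb2d hb3d hb4d hb5d hb6d hb7d
  have d1 : ((a:ℕ) < 2 ∧ 2 ≤ n ∧ (b1:ℕ) = 2 - 1 - (a:ℕ)) ∨ (¬((a:ℕ) < 2 ∧ 2 ≤ n) ∧ (b1:ℕ) = (a:ℕ)) := by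
    split_ifs at h1 with h <;> [exact Or.inl ⟨h.1, h.2, h1⟩; exact Or.inr ⟨h, h1⟩]
  have d2 : ((b1:ℕ) < 3 ∧ 3 ≤ n ∧ (b2:ℕ) = 3 - 1 - ↑b1) ∨ (¬((b1:ℕ) < 3 ∧ 3 ≤ n) ∧ (b2:ℕ) = ↑b1) := by
    split_ifs at h2 with h <;> [exact Or.inl ⟨h.1, h.2, h2⟩; exact Or.inr ⟨h, h2⟩]
  have d3 : ((b2:ℕ) < 2 ∧ 2 ≤ n ∧ (b3:ℕ) = 2 - 1 - ↑b2) ∨ (¬((b2:ℕ) < 2 ∧ 2 ≤ n) ∧ (b3:ℕ) = ↑b2) := by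
    split_ifs at h3 with h <;> [exact Or.inl ⟨h.1, h.2, h3⟩; exact Or.inr ⟨h, h3⟩]
  have d4 : ((b3:ℕ) < k ∧ k ≤ n ∧ (b4:ℕ) = k - 1 - ↑b3) ∨ (¬((b3:ℕ) < k ∧ k ≤ n) ∧ (b4:ℕ) = ↑b3) := by
    split_ifs at h4 with h <;> [exact Or.inl ⟨h.1, h.2, h4⟩; exact Or.inr ⟨h, h4⟩]
  have d5 : ((b4:ℕ) < k-1 ∧ k-1 ≤ n ∧ (b5:ℕ) = k - 1 - 1 - ↑b4) ∨ (¬((b4:ℕ) < k-1 ∧ k-1 ≤ n) ∧ (b5:ℕ) = ↑b4) := by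
    split_ifs at h5 with h <;> [exact Or.inl ⟨h.1, h.2, h5⟩; exact Or.inr ⟨h, h5⟩]
  have d6 : ((b5:ℕ) < 2 ∧ 2 ≤ n ∧ (b6:ℕ) = 2 - 1 - ↑b5) ∨ (¬((b5:ℕ) < 2 ∧ 2 ≤ n) ∧ (b6:ℕ) = ↑b5) := by
    split_ifs at h6 with h <;> [exact Or.inl ⟨h.1, h.2, h6⟩; exact Or.inr ⟨h, h6⟩]
  have d7 : ((b6:ℕ) < k-1 ∧ k-1 ≤ n ∧ (b7:ℕ) = k - 1 - 1 - ↑b6) ∨ (¬((b6:ℕ) < k-1 ∧ k-1 ≤ n) ∧ (b7:ℕ) = ↑b6) := by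
    split_ifs at h7 with h <;> [exact Or.inl ⟨h.1, h.2, h7⟩; exact Or.inr ⟨h, h7⟩]
  clear h1 h2 h3 h4 h5 h6 h7 h8
  have ha := a.isLt
  split_ifs <;> omega
end

section
/- For any n ≥ 4 and any integers i, j, k with 2 ≤ i < j ≤ k-1 and 4 ≤ k ≤ n, the product (r_k r_{k-j+1} r_k r_i)^2 equals the identity permutation of {1,...,n}. -/
attribute [irreducible] pancakeRev

set_option maxHeartbeats 1000000 in
theorem pancake_C8_7 (n i j k : ℕ) (hn : 4 ≤ n) (hi : 2 ≤ i) (hij : i < j)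
    (hjk : j ≤ k - 1) (hk : 4 ≤ k) (hkn : k ≤ n) :
    (pancakeRev n k * pancakeRev n (k - j + 1) * pancakeRev n k * pancakeRev n i) ^ 2 =
      1 := by
  have key : ∀ b : Fin n,
      ((pancakeRev n k) ((pancakeRev n (k - j + 1)) ((pancakeRev n k)
        ((pancakeRev n i) b)))).val =
      if b.val < i then i - 1 - b.val
      else if j - 1 ≤ b.val ∧ b.val < k then k + j - 2 - b.val
      else b.val := by
    intro b
    set b1 := pancakeRev n i b with hb1
    set b2 := pancakeRev n k b1 with hb2
    set b3 := pancakeRev n (k - j + 1) b2 with hb3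
    have h1 := pancakeRev_val n i b
    have h2 := pancakeRev_val n k b1
    have h3 := pancakeRev_val n (k - j + 1) b2
    have h4 := pancakeRev_val n k b3
    rw [← hb1] at h1
    rw [← hb2] at h2
    rw [← hb3] at h3
    clear_value b1 b2 b3
    clear hb1 hb2 hb3
    rw [h4]
    have hb := b.isLt
    split_ifs at h1 h2 h3 ⊢ <;> omega
  ext a
  simp only [sq, Equiv.Perm.mul_apply, Equiv.Perm.one_apply]
  rw [key, key]
  have ha := a.isLt
  split_ifs <;> omega
end

section
/- For any n ≥ 4 and any a, b with 2 ≤ a < b ≤ n, the product r_b r_a r_b r_a r_b r_a (i.e., (r_b r_a)^3) is not the identity permutation of {1,...,n} unless (a,b) = (2,3); consequently the Pancake graph P_n has no 6-cycle of form (r_b r_a)^3 except (r_3 r_2)^3. -/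
lemma rev_lt (n m x : ℕ) (hx : x < n) (h1 : x < m) (h2 : m ≤ n) :
    pancakeRev n m ⟨x, hx⟩ = ⟨m - 1 - x, by omega⟩ := by
  simp [pancakeRev, Function.Involutive.toPerm, h1, h2]

lemma rev_ge (n m x : ℕ) (hx : x < n) (h1 : m ≤ x) :
    pancakeRev n m ⟨x, hx⟩ = ⟨x, hx⟩ := by
  have : ¬(x < m ∧ m ≤ n) := by omega
  simp [pancakeRev, Function.Involutive.toPerm, this]

theorem pancake_no_other_sixCycles (n a b : ℕ) (hn : 4 ≤ n) (ha : 2 ≤ a)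
    (hab : a < b) (hb : b ≤ n) (hne : ¬(a = 2 ∧ b = 3)) :
    (pancakeRev n b * pancakeRev n a) ^ 3 ≠ 1 := by
  intro h
  have key : ∀ x : Fin n, pancakeRev n b (pancakeRev n a (pancakeRev n b
      (pancakeRev n a (pancakeRev n b (pancakeRev n a x))))) = x := by
    intro x
    have := Equiv.ext_iff.mp h x
    simpa [pow_succ, Equiv.Perm.mul_apply] using this
  rcases lt_or_ge b (2*a) with hlt | hge
  · rcases lt_or_ge (2*b) (3*a) with h2 | h2
    · -- case 2b < 3a, witness 0
      have k := key ⟨0, by omega⟩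
      rw [rev_lt n a 0 (by omega) (by omega) (by omega),
          rev_lt n b (a-1-0) (by omega) (by omega) (by omega),
          rev_lt n a (b-1-(a-1-0)) (by omega) (by omega) (by omega),
          rev_lt n b (a-1-(b-1-(a-1-0))) (by omega) (by omega) (by omega),
          rev_lt n a (b-1-(a-1-(b-1-(a-1-0)))) (by omega) (by omega) (by omega),
          rev_lt n b (a-1-(b-1-(a-1-(b-1-(a-1-0))))) (by omega) (by omega) (by omega)] at k
      simp only [Fin.mk.injEq] at k
      omega
    · rcases Nat.lt_or_ge b (2*a-1) with h3 | h3
      · -- case 3a ≤ 2b, b ≤ 2a-2, witness 0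
        have k := key ⟨0, by omega⟩
        rw [rev_lt n a 0 (by omega) (by omega) (by omega),
            rev_lt n b (a-1-0) (by omega) (by omega) (by omega),
            rev_lt n a (b-1-(a-1-0)) (by omega) (by omega) (by omega),
            rev_lt n b (a-1-(b-1-(a-1-0))) (by omega) (by omega) (by omega),
            rev_ge n a (b-1-(a-1-(b-1-(a-1-0)))) (by omega) (by omega),
            rev_lt n b (b-1-(a-1-(b-1-(a-1-0)))) (by omega) (by omega) (by omega)] at k
        simp only [Fin.mk.injEq] at k
        omega
      · -- case b = 2a-1, a ≥ 3, witness 1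
        have ha3 : 3 ≤ a := by omega
        have k := key ⟨1, by omega⟩
        rw [rev_lt n a 1 (by omega) (by omega) (by omega),
            rev_lt n b (a-1-1) (by omega) (by omega) (by omega),
            rev_ge n a (b-1-(a-1-1)) (by omega) (by omega),
            rev_lt n b (b-1-(a-1-1)) (by omega) (by omega) (by omega),
            rev_lt n a (b-1-(b-1-(a-1-1))) (by omega) (by omega) (by omega),
            rev_lt n b (a-1-(b-1-(b-1-(a-1-1)))) (by omega) (by omega) (by omega)] at k
        simp only [Fin.mk.injEq] at k
        omega
  · -- case 2a ≤ b, witness 0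
    have k := key ⟨0, by omega⟩
    rw [rev_lt n a 0 (by omega) (by omega) (by omega),
        rev_lt n b (a-1-0) (by omega) (by omega) (by omega),
        rev_ge n a (b-1-(a-1-0)) (by omega) (by omega),
        rev_lt n b (b-1-(a-1-0)) (by omega) (by omega) (by omega),
        rev_lt n a (b-1-(b-1-(a-1-0))) (by omega) (by omega) (by omega),
        rev_lt n b (a-1-(b-1-(b-1-(a-1-0)))) (by omega) (by omega) (by omega)] at k
    simp only [Fin.mk.injEq] at k
    omega
end
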